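/- Let H be a complex Hilbert space and M > 0. For each τ ∈ (0,1) let ψ_τ : ℝ → H be strongly measurable with ‖ψ_τ(s)‖ ≤ M for almost every s, and let ψ : ℝ → H be strongly measurable with ‖ψ(s)‖ ≤ M for almost every s. Define, for t > 0 and s ∈ ℝ, Ψ_τ(t + is) = (P_t ∗ ψ_τ)(s) and Ψ(t + is) = (P_t ∗ ψ)(s). Assume that for every z ∈ ℂ with Re z > 0, Ψ_τ(z) → Ψ(z) in H as τ → 0⁺. Then for every v ∈ L¹(ℝ, H), ∫_ℝ ⟨v(t), ψ_τ(t)⟩ dt → ∫_ℝ ⟨v(t), ψ(t)⟩ dt as τ → 0⁺. -/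

import Mathlib

open MeasureTheory Filter Real
open scoped ComplexInnerProductSpace

set_option linter.unusedSectionVars false
set_option linter.unusedVariables false

namespace FeldmanAux

noncomputable def K (a s : ℝ) : ℝ := (a / π) / (a ^ 2 + s ^ 2)

lemma K_def (a s : ℝ) : K a s = (a / π) / (a ^ 2 + s ^ 2) := rfl

lemma K_nonneg {a : ℝ} (ha : 0 < a) (s : ℝ) : 0 ≤ K a s := by
  have h1 : 0 < a ^ 2 + s ^ 2 := by positivity
  have h2 : 0 ≤ a / π := by positivity
  exact div_nonneg h2 h1.le

lemma K_cont {a : ℝ} (ha : 0 < a) : Continuous (K a) :=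
  continuous_const.div (by fun_prop) fun s => by positivity

lemma K_even {a : ℝ} (x y : ℝ) : K a (x - y) = K a (y - x) := by
  unfold K; rw [show (x - y) ^ 2 = (y - x) ^ 2 by ring]

lemma K_le {a : ℝ} (ha : 0 < a) (s : ℝ) : K a s ≤ (π * a)⁻¹ := by
  have h1 : (a / π) / (a ^ 2 + s ^ 2) ≤ (a / π) / (a ^ 2) := by
    apply div_le_div_of_nonneg_left (by positivity) (by positivity)
    nlinarith [sq_nonneg s]
  calc K a s ≤ (a / π) / a ^ 2 := h1
    _ = (π * a)⁻¹ := by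
        field_simp

lemma K_eq {a : ℝ} (ha : 0 < a) (s : ℝ) : K a s = (π * a)⁻¹ * (1 + (s / a) ^ 2)⁻¹ := by
  unfold K
  have h1 : (0:ℝ) < a ^ 2 + s ^ 2 := by positivity
  have hπ := pi_pos
  field_simp

lemma K_integrable {a : ℝ} (ha : 0 < a) : Integrable (K a) := by
  have h : Integrable fun s : ℝ => (1 + (s * a⁻¹) ^ 2)⁻¹ :=
    (integrable_comp_mul_right_iff (fun x : ℝ => (1 + x ^ 2)⁻¹) (inv_ne_zero ha.ne')).2
      integrable_inv_one_add_sq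
  exact (h.const_mul (π * a)⁻¹).congr (Filter.Eventually.of_forall fun s => by
    rw [K_eq ha s, div_eq_mul_inv])

lemma K_integral {a : ℝ} (ha : 0 < a) : ∫ s, K a s = 1 := by
  have h1 : (∫ s : ℝ, (1 + (s / a) ^ 2)⁻¹) = |a| • ∫ x : ℝ, (1 + x ^ 2)⁻¹ :=
    MeasureTheory.Measure.integral_comp_div (fun x : ℝ => (1 + x ^ 2)⁻¹) a
  have h2 : ∫ s, K a s = ∫ s : ℝ, (π * a)⁻¹ * (1 + (s / a) ^ 2)⁻¹ := by
    simp_rw [K_eq ha]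
  rw [h2, integral_const_mul, h1, integral_univ_inv_one_add_sq, abs_of_pos ha, smul_eq_mul]
  field_simp

lemma K_shift_integrable {a : ℝ} (ha : 0 < a) (c : ℝ) : Integrable fun s => K a (c - s) :=
  (K_integrable ha).comp_sub_left c

lemma K_shift_integral {a : ℝ} (ha : 0 < a) (c : ℝ) : ∫ s, K a (c - s) = 1 := by
  rw [integral_sub_left_eq_self (K a) volume c]
  exact K_integral ha

lemma K_scale {a : ℝ} (ha : 0 < a) (u : ℝ) : a * K a (a * u) = π⁻¹ * (1 + u ^ 2)⁻¹ := by
  unfold K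
  have hπ := pi_pos
  have h1 : (0:ℝ) < a ^ 2 + (a * u) ^ 2 := by positivity
  have h2 : (0:ℝ) < 1 + u ^ 2 := by positivity
  field_simp


variable {H : Type*} [NormedAddCommGroup H] [InnerProductSpace ℂ H] [CompleteSpace H]

lemma pair_integrable {M : ℝ} {w φ : ℝ → H} (hw : Integrable w)
    (hφm : AEStronglyMeasurable φ volume) (hφb : ∀ᵐ s : ℝ, ‖φ s‖ ≤ M) :
    Integrable fun t => (⟪w t, φ t⟫ : ℂ) := by
  refine Integrable.mono' (hw.norm.mul_const M) (hw.aestronglyMeasurable.inner hφm) ?_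
  filter_upwards [hφb] with t ht
  calc ‖(⟪w t, φ t⟫ : ℂ)‖ ≤ ‖w t‖ * ‖φ t‖ := norm_inner_le_norm _ _
    _ ≤ ‖w t‖ * M := mul_le_mul_of_nonneg_left ht (norm_nonneg _)

lemma pair_bound {M : ℝ} {w φ : ℝ → H} (hw : Integrable w)
    (hφb : ∀ᵐ s : ℝ, ‖φ s‖ ≤ M) :
    ‖∫ t, (⟪w t, φ t⟫ : ℂ)‖ ≤ M * ∫ t, ‖w t‖ := by
  refine (norm_integral_le_integral_norm _).trans ?_
  rw [← integral_const_mul]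
  refine integral_mono_of_nonneg (Eventually.of_forall fun t => norm_nonneg _)
    (hw.norm.const_mul M) ?_
  filter_upwards [hφb] with t ht
  calc ‖(⟪w t, φ t⟫ : ℂ)‖ ≤ ‖w t‖ * ‖φ t‖ := norm_inner_le_norm _ _
    _ ≤ ‖w t‖ * M := mul_le_mul_of_nonneg_left ht (norm_nonneg _)
    _ = M * ‖w t‖ := mul_comm _ _

lemma pair_diff {M : ℝ} {u w φ : ℝ → H} (hu : Integrable u) (hw : Integrable w)
    (hφm : AEStronglyMeasurable φ volume) (hφb : ∀ᵐ s : ℝ, ‖φ s‖ ≤ M) :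
    ‖(∫ t, (⟪u t, φ t⟫ : ℂ)) - ∫ t, (⟪w t, φ t⟫ : ℂ)‖ ≤ M * ∫ t, ‖u t - w t‖ := by
  rw [← integral_sub (pair_integrable hu hφm hφb) (pair_integrable hw hφm hφb)]
  have h : (fun t => (⟪u t, φ t⟫ : ℂ) - ⟪w t, φ t⟫) = fun t => (⟪u t - w t, φ t⟫ : ℂ) := by
    funext t; rw [inner_sub_left]
  rw [h]
  exact pair_bound (hu.sub hw) hφb

lemma conv_integrand_integrable {a M : ℝ} (ha : 0 < a) {φ : ℝ → H}
    (hφm : AEStronglyMeasurable φ volume) (hφb : ∀ᵐ s : ℝ, ‖φ s‖ ≤ M) (c : ℝ) :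
    Integrable fun s => K a (c - s) • φ s := by
  refine Integrable.mono' ((K_shift_integrable ha c).mul_const M)
    (((K_cont ha).comp (continuous_const.sub continuous_id)).aestronglyMeasurable.smul hφm) ?_
  filter_upwards [hφb] with s hs
  rw [norm_smul, Real.norm_eq_abs, abs_of_nonneg (K_nonneg ha _)]
  exact mul_le_mul_of_nonneg_left hs (K_nonneg ha _)

lemma conv_integrand_integrable' {a : ℝ} (ha : 0 < a) {g : ℝ → H} (hg : Integrable g) (c : ℝ) :
    Integrable fun s' => K a (c - s') • g s' := by
  refine Integrable.mono' (hg.norm.const_mul (π * a)⁻¹)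
    (((K_cont ha).comp (continuous_const.sub continuous_id)).aestronglyMeasurable.smul
      hg.aestronglyMeasurable) ?_
  refine Eventually.of_forall fun s => ?_
  rw [norm_smul, Real.norm_eq_abs, abs_of_nonneg (K_nonneg ha _)]
  exact mul_le_mul_of_nonneg_right (K_le ha _) (norm_nonneg _)

lemma conv_norm_le {a M : ℝ} (ha : 0 < a) {φ : ℝ → H}
    (hφb : ∀ᵐ s : ℝ, ‖φ s‖ ≤ M) (c : ℝ) :
    ‖∫ s, K a (c - s) • φ s‖ ≤ M := by
  refine (norm_integral_le_integral_norm _).trans ?_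
  have h2 : (∫ s, ‖K a (c - s) • φ s‖) ≤ ∫ s, K a (c - s) * M := by
    refine integral_mono_of_nonneg (Eventually.of_forall fun s => norm_nonneg _)
      ((K_shift_integrable ha c).mul_const M) ?_
    filter_upwards [hφb] with s hs
    rw [norm_smul, Real.norm_eq_abs, abs_of_nonneg (K_nonneg ha _)]
    exact mul_le_mul_of_nonneg_left hs (K_nonneg ha _)
  refine h2.trans ?_
  rw [integral_mul_const, K_shift_integral ha, one_mul]

lemma Phi_SM {a : ℝ} (ha : 0 < a) {φ : ℝ → H} (hφ : StronglyMeasurable φ) :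
    StronglyMeasurable fun c : ℝ => ∫ s, K a (c - s) • φ s := by
  apply StronglyMeasurable.integral_prod_right'
    (f := fun p : ℝ × ℝ => K a (p.1 - p.2) • φ p.2)
  exact (((K_cont ha).comp (continuous_fst.sub continuous_snd)).stronglyMeasurable).smul
    (hφ.comp_measurable measurable_snd)

set_option maxHeartbeats 1000000 in
lemma swap_eq {a M : ℝ} (ha : 0 < a) {g φ : ℝ → H}
    (hg : Integrable g) (hφm : StronglyMeasurable φ) (hφb : ∀ᵐ s : ℝ, ‖φ s‖ ≤ M) :
    (∫ s, (⟪∫ s', K a (s - s') • g s', φ s⟫ : ℂ))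
      = ∫ s', (⟪g s', ∫ s, K a (s' - s) • φ s⟫ : ℂ) := by
  -- pull the inner product inside the s'-integral
  have e1 : ∀ s : ℝ, (⟪∫ s', K a (s - s') • g s', φ s⟫ : ℂ)
      = ∫ s', ((K a (s - s') : ℂ) * ⟪g s', φ s⟫ : ℂ) := by
    intro s
    have hf := conv_integrand_integrable' ha hg s
    calc (⟪∫ s', K a (s - s') • g s', φ s⟫ : ℂ)
        = (starRingEnd ℂ) (⟪φ s, ∫ s', K a (s - s') • g s'⟫ : ℂ) := (inner_conj_symm _ _).symm
      _ = (starRingEnd ℂ) (∫ s', (⟪φ s, K a (s - s') • g s'⟫ : ℂ)) := by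
          rw [integral_inner hf]
      _ = ∫ s', (starRingEnd ℂ) (⟪φ s, K a (s - s') • g s'⟫ : ℂ) := (integral_conj).symm
      _ = ∫ s', ((K a (s - s') : ℂ) * ⟪g s', φ s⟫ : ℂ) := by
          refine integral_congr_ae (Eventually.of_forall fun s' => ?_)
          simp only [inner_conj_symm, RCLike.real_smul_eq_coe_smul (K := ℂ), inner_smul_left,
            Complex.conj_ofReal, smul_eq_mul]
          rw [RCLike.conj_ofReal]
          rfl
  -- Fubini
  have hF : Integrable (Function.uncurry fun s s' : ℝ =>
      ((K a (s - s') : ℂ) * ⟪g s', φ s⟫ : ℂ)) (volume.prod volume) := by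
    have hdom : Integrable (fun p : ℝ × ℝ => ‖g p.2‖ * (M * K a (p.1 - p.2)))
        (volume.prod volume) :=
      Integrable.convolution_integrand (ContinuousLinearMap.mul ℝ ℝ) hg.norm
        ((K_integrable ha).const_mul M)
    have hmeas : AEStronglyMeasurable (Function.uncurry fun s s' : ℝ =>
        ((K a (s - s') : ℂ) * ⟪g s', φ s⟫ : ℂ)) (volume.prod volume) := by
      refine AEStronglyMeasurable.mul ?_ ?_
      · exact (Complex.continuous_ofReal.comp
          ((K_cont ha).comp (continuous_fst.sub continuous_snd))).aestronglyMeasurable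
      · exact AEStronglyMeasurable.inner (hg.aestronglyMeasurable.comp_snd)
          ((hφm.comp_measurable measurable_fst).aestronglyMeasurable)
    refine Integrable.mono' hdom hmeas ?_
    have hbd : ∀ᵐ p : ℝ × ℝ ∂(volume.prod volume), ‖φ p.1‖ ≤ M :=
      (Measure.quasiMeasurePreserving_fst (μ := (volume : Measure ℝ))
        (ν := (volume : Measure ℝ))).tendsto_ae.eventually hφb
    filter_upwards [hbd] with p hp
    rw [Function.uncurry]
    rw [norm_mul, Complex.norm_real, Real.norm_eq_abs, abs_of_nonneg (K_nonneg ha _)]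
    calc K a (p.1 - p.2) * ‖(⟪g p.2, φ p.1⟫ : ℂ)‖
        ≤ K a (p.1 - p.2) * (‖g p.2‖ * M) := by
          refine mul_le_mul_of_nonneg_left ?_ (K_nonneg ha _)
          exact (norm_inner_le_norm _ _).trans
            (mul_le_mul_of_nonneg_left hp (norm_nonneg _))
      _ = ‖g p.2‖ * (M * K a (p.1 - p.2)) := by ring
  have e2 := integral_integral_swap hF
  -- push the inner product back on the right-hand side
  have e3 : ∀ s' : ℝ, (∫ s, ((K a (s - s') : ℂ) * ⟪g s', φ s⟫ : ℂ))
      = (⟪g s', ∫ s, K a (s' - s) • φ s⟫ : ℂ) := by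
    intro s'
    rw [← integral_inner (conv_integrand_integrable ha hφm.aestronglyMeasurable hφb s')]
    refine integral_congr_ae (Eventually.of_forall fun s => ?_)
    simp only [RCLike.real_smul_eq_coe_smul (K := ℂ), inner_smul_right, smul_eq_mul]
    rw [K_even]
    rfl
  calc (∫ s, (⟪∫ s', K a (s - s') • g s', φ s⟫ : ℂ))
      = ∫ s, ∫ s', ((K a (s - s') : ℂ) * ⟪g s', φ s⟫ : ℂ) := by
        exact integral_congr_ae (Eventually.of_forall e1)
    _ = ∫ s', ∫ s, ((K a (s - s') : ℂ) * ⟪g s', φ s⟫ : ℂ) := e2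
    _ = ∫ s', (⟪g s', ∫ s, K a (s' - s) • φ s⟫ : ℂ) :=
        integral_congr_ae (Eventually.of_forall e3)

lemma step1 {a M : ℝ} (ha : 0 < a) {g : ℝ → H} (hg : Integrable g)
    {ψ : ℝ → ℝ → H} {ψlim : ℝ → H}
    (hψmeas : ∀ τ ∈ Set.Ioo (0:ℝ) 1, StronglyMeasurable (ψ τ))
    (hψbd : ∀ τ ∈ Set.Ioo (0:ℝ) 1, ∀ᵐ s : ℝ, ‖ψ τ s‖ ≤ M)
    (hψlimmeas : StronglyMeasurable ψlim) (hψlimbd : ∀ᵐ s : ℝ, ‖ψlim s‖ ≤ M)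
    (hconvK : ∀ c : ℝ, Tendsto (fun τ => ∫ s, K a (c - s) • ψ τ s)
        (nhdsWithin 0 (Set.Ioo 0 1)) (nhds (∫ s, K a (c - s) • ψlim s))) :
    Tendsto (fun τ => ∫ s, (⟪∫ s', K a (s - s') • g s', ψ τ s⟫ : ℂ))
      (nhdsWithin 0 (Set.Ioo 0 1))
      (nhds (∫ s, (⟪∫ s', K a (s - s') • g s', ψlim s⟫ : ℂ))) := by
  rw [swap_eq ha hg hψlimmeas hψlimbd]
  have main : Tendsto (fun τ => ∫ s', (⟪g s', ∫ s, K a (s' - s) • ψ τ s⟫ : ℂ))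
      (nhdsWithin 0 (Set.Ioo 0 1))
      (nhds (∫ s', (⟪g s', ∫ s, K a (s' - s) • ψlim s⟫ : ℂ))) := by
    refine tendsto_integral_filter_of_dominated_convergence (fun s' => ‖g s'‖ * M)
      ?_ ?_ (hg.norm.mul_const M) ?_
    · filter_upwards [self_mem_nhdsWithin] with τ hτ
      exact hg.aestronglyMeasurable.inner (Phi_SM ha (hψmeas τ hτ)).aestronglyMeasurable
    · filter_upwards [self_mem_nhdsWithin] with τ hτ
      refine Eventually.of_forall fun s' => ?_
      calc ‖(⟪g s', ∫ s, K a (s' - s) • ψ τ s⟫ : ℂ)‖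
          ≤ ‖g s'‖ * ‖∫ s, K a (s' - s) • ψ τ s‖ := norm_inner_le_norm _ _
        _ ≤ ‖g s'‖ * M := mul_le_mul_of_nonneg_left
            (conv_norm_le ha (hψbd τ hτ) s') (norm_nonneg _)
    · exact Eventually.of_forall fun s' => tendsto_const_nhds.inner (hconvK s')
  refine main.congr' ?_
  filter_upwards [self_mem_nhdsWithin] with τ hτ
  exact (swap_eq ha hg (hψmeas τ hτ) (hψbd τ hτ)).symm

/-- local modulus of L¹-continuity of translation -/
noncomputable def om (g : ℝ → H) (y : ℝ) : ℝ := ∫ s, ‖g s - g (s - y)‖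

lemma om_nonneg (g : ℝ → H) (y : ℝ) : 0 ≤ om g y :=
  integral_nonneg fun s => norm_nonneg _

lemma om_meas {g : ℝ → H} (hgc : Continuous g) : StronglyMeasurable (om g) := by
  apply StronglyMeasurable.integral_prod_right' (f := fun p : ℝ × ℝ => ‖g p.2 - g (p.2 - p.1)‖)
  exact ((hgc.comp continuous_snd).sub
    (hgc.comp (continuous_snd.sub continuous_fst))).norm.stronglyMeasurable

lemma om_bd {g : ℝ → H} (hg : Integrable g) (y : ℝ) : om g y ≤ 2 * ∫ s, ‖g s‖ := by
  have h1 : om g y ≤ ∫ s, (‖g s‖ + ‖g (s - y)‖) := by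
    refine integral_mono_of_nonneg (Eventually.of_forall fun s => norm_nonneg _)
      (hg.norm.add (hg.comp_sub_right y).norm) ?_
    exact Eventually.of_forall fun s => norm_sub_le _ _
  refine h1.trans ?_
  rw [integral_add hg.norm (hg.comp_sub_right y).norm,
    integral_sub_right_eq_self (fun s => ‖g s‖) y]
  ring_nf
  exact le_refl _

lemma om_tendsto {g : ℝ → H} (hgc : Continuous g) (hgs : HasCompactSupport g) :
    Tendsto (om g) (nhds 0) (nhds 0) := by
  rw [Metric.tendsto_nhds_nhds]
  intro ε hε
  set C : Set ℝ := Metric.cthickening 1 (tsupport g) with hC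
  have hCcomp : IsCompact C := hgs.cthickening
  have hCfin : volume C < ⊤ := hCcomp.measure_lt_top
  set m : ℝ := (volume C).toReal + 1 with hm
  have hm0 : 0 < m := by positivity
  have hu : UniformContinuous g := hgs.uniformContinuous_of_continuous hgc
  obtain ⟨δ₀, hδ₀, hδ⟩ := Metric.uniformContinuous_iff.1 hu (ε / (2 * m)) (by positivity)
  refine ⟨min δ₀ 1, by positivity, ?_⟩
  intro y hy
  rw [Real.dist_eq, sub_zero] at hy
  have hy1 : |y| ≤ 1 := le_of_lt (lt_of_lt_of_le hy (min_le_right _ _))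
  have hy0 : |y| < δ₀ := lt_of_lt_of_le hy (min_le_left _ _)
  -- the integrand vanishes off C
  have hvanish : ∀ s : ℝ, s ∉ C → ‖g s - g (s - y)‖ = 0 := by
    intro s hs
    have h1 : g s = 0 := by
      apply image_eq_zero_of_notMem_tsupport
      intro hmem
      exact hs (Metric.self_subset_cthickening _ hmem)
    have h2 : g (s - y) = 0 := by
      apply image_eq_zero_of_notMem_tsupport
      intro hmem
      apply hs
      refine Metric.mem_cthickening_of_dist_le s (s - y) 1 _ hmem ?_
      rw [Real.dist_eq]
      simpa using hy1
    simp [h1, h2]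
  have heq : om g y = ∫ s in C, ‖g s - g (s - y)‖ := by
    rw [om, ← setIntegral_eq_integral_of_forall_compl_eq_zero (fun s hs => hvanish s hs)]
  have hbd : om g y ≤ ε / (2 * m) * (volume C).toReal := by
    rw [heq]
    have hmeasr : AEStronglyMeasurable (fun s => ‖g s - g (s - y)‖) (volume.restrict C) :=
      (((hgc.sub (hgc.comp (continuous_id.sub continuous_const))).norm).aestronglyMeasurable).restrict
    have hpt : ∀ s ∈ C, ‖‖g s - g (s - y)‖‖ ≤ ε / (2 * m) := by
      intro s _
      rw [Real.norm_eq_abs, abs_of_nonneg (norm_nonneg _), ← dist_eq_norm]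
      exact le_of_lt (hδ (by rw [Real.dist_eq]; simpa using hy0))
    have hnorm := norm_setIntegral_le_of_norm_le_const (C := ε / (2 * m)) hCfin hpt
    exact (le_abs_self _).trans (by rw [← Real.norm_eq_abs]; exact hnorm)
  rw [Real.dist_eq, sub_zero, abs_of_nonneg (om_nonneg g y)]
  calc om g y ≤ ε / (2 * m) * (volume C).toReal := hbd
    _ < ε := by
        have h1 : (volume C).toReal < m := by rw [hm]; linarith
        have h2 : ε / (2 * m) * (volume C).toReal < ε / (2 * m) * (2 * m) := by
          apply mul_lt_mul_of_pos_left _ (by positivity)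
          linarith
        calc ε / (2 * m) * (volume C).toReal < ε / (2 * m) * (2 * m) := h2
          _ = ε := by field_simp

lemma A_tendsto {g : ℝ → H} (hgc : Continuous g) (hgs : HasCompactSupport g) :
    Tendsto (fun a => ∫ y, K a y * om g y) (nhdsWithin 0 (Set.Ioi 0)) (nhds 0) := by
  have hg : Integrable g := hgc.integrable_of_hasCompactSupport hgs
  have key : ∀ a ∈ Set.Ioi (0:ℝ),
      (∫ y, K a y * om g y) = ∫ u, (π⁻¹ * (1 + u ^ 2)⁻¹) * om g (a * u) := by
    intro a ha
    rw [Set.mem_Ioi] at ha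
    have h := MeasureTheory.Measure.integral_comp_mul_left (fun y => K a y * om g y) a
    rw [abs_inv, abs_of_pos ha, smul_eq_mul] at h
    have h2 : (∫ y, K a y * om g y) = a * ∫ x, K a (a * x) * om g (a * x) := by
      rw [h]
      field_simp
    rw [h2, ← integral_const_mul]
    refine integral_congr_ae (Eventually.of_forall fun u => ?_)
    beta_reduce
    rw [← mul_assoc, K_scale ha u]
  have main : Tendsto (fun a => ∫ u, (π⁻¹ * (1 + u ^ 2)⁻¹) * om g (a * u))
      (nhdsWithin 0 (Set.Ioi 0)) (nhds 0) := by
    have hom0 : om g 0 = 0 := by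
      rw [om]
      simp
    have hDCT : Tendsto (fun a => ∫ u, (π⁻¹ * (1 + u ^ 2)⁻¹) * om g (a * u))
        (nhdsWithin 0 (Set.Ioi 0)) (nhds (∫ u : ℝ, (π⁻¹ * (1 + u ^ 2)⁻¹) * om g 0)) := by
      refine tendsto_integral_filter_of_dominated_convergence
        (fun u => π⁻¹ * (1 + u ^ 2)⁻¹ * (2 * ∫ s, ‖g s‖)) ?_ ?_ ?_ ?_
      · refine Eventually.of_forall fun a => ?_
        refine AEStronglyMeasurable.mul ?_ ?_
        · exact (continuous_const.mul ((continuous_const.add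
            (continuous_pow 2)).inv₀ (fun u => (by positivity : (0:ℝ) < 1 + u ^ 2).ne'))).aestronglyMeasurable
        · exact ((om_meas hgc).measurable.comp (measurable_id.const_mul a)).aestronglyMeasurable
      · refine Eventually.of_forall fun a => Eventually.of_forall fun u => ?_
        have h1 : (0:ℝ) ≤ π⁻¹ * (1 + u ^ 2)⁻¹ := by positivity
        rw [Real.norm_eq_abs, abs_of_nonneg (mul_nonneg h1 (om_nonneg g _))]
        exact mul_le_mul_of_nonneg_left (om_bd hg _) h1
      · exact ((integrable_inv_one_add_sq.const_mul π⁻¹).mul_const _)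
      · refine Eventually.of_forall fun u => ?_
        refine tendsto_const_nhds.mul ?_
        have hmul : Tendsto (fun a : ℝ => a * u) (nhdsWithin 0 (Set.Ioi 0)) (nhds 0) := by
          have hcont : Continuous (fun a : ℝ => a * u) := continuous_mul_right u
          have := (hcont.tendsto (0:ℝ)).mono_left (nhdsWithin_le_nhds (s := Set.Ioi (0:ℝ)))
          simpa using this
        have homt : Tendsto (om g) (nhds 0) (nhds (om g 0)) := by
          rw [hom0]
          exact om_tendsto hgc hgs
        exact (homt.comp hmul).congr (fun a => rfl)
    have hI : (∫ u : ℝ, (π⁻¹ * (1 + u ^ 2)⁻¹) * om g 0) = 0 := by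
      rw [hom0]
      simp
    rw [hI] at hDCT
    exact hDCT
  exact main.congr' (by filter_upwards [self_mem_nhdsWithin] with a ha using (key a ha).symm)

lemma step3core {a : ℝ} (ha : 0 < a) {g : ℝ → H} (hgc : Continuous g)
    (hgs : HasCompactSupport g) :
    (∫ s, ‖g s - ∫ s', K a (s - s') • g s'‖) ≤ ∫ y, K a y * om g y := by
  have hg : Integrable g := hgc.integrable_of_hasCompactSupport hgs
  -- product integrability of the dominating kernel expression
  have hG : Integrable (Function.uncurry fun s y : ℝ => K a y * ‖g s - g (s - y)‖)
      (volume.prod volume) := by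
    have h1 : Integrable (fun p : ℝ × ℝ => ‖g p.1‖ * K a p.2) (volume.prod volume) :=
      hg.norm.mul_prod (K_integrable ha)
    have h2 : Integrable (fun p : ℝ × ℝ => K a p.2 * ‖g (p.1 - p.2)‖) (volume.prod volume) :=
      Integrable.convolution_integrand (ContinuousLinearMap.mul ℝ ℝ) (K_integrable ha) hg.norm
    refine Integrable.mono' (h1.add h2) ?_ ?_
    · exact (((K_cont ha).comp continuous_snd).mul ((hgc.comp continuous_fst).sub
        (hgc.comp (continuous_fst.sub continuous_snd))).norm).aestronglyMeasurable
    · refine Eventually.of_forall fun p => ?_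
      rw [Function.uncurry]
      have h3 : (0:ℝ) ≤ K a p.2 := K_nonneg ha _
      rw [Real.norm_eq_abs, abs_of_nonneg (mul_nonneg h3 (norm_nonneg _))]
      calc K a p.2 * ‖g p.1 - g (p.1 - p.2)‖
          ≤ K a p.2 * (‖g p.1‖ + ‖g (p.1 - p.2)‖) :=
            mul_le_mul_of_nonneg_left (norm_sub_le _ _) h3
        _ = ‖g p.1‖ * K a p.2 + K a p.2 * ‖g (p.1 - p.2)‖ := by ring
  -- pointwise bound
  have hpt : ∀ s : ℝ, ‖g s - ∫ s', K a (s - s') • g s'‖ ≤ ∫ y, K a y * ‖g s - g (s - y)‖ := by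
    intro s
    have e0 : g s = ∫ s', K a (s - s') • g s := by
      rw [integral_smul_const, K_shift_integral ha, one_smul]
    have e1 : g s - (∫ s', K a (s - s') • g s') = ∫ s', K a (s - s') • (g s - g s') := by
      rw [eq_comm]
      calc (∫ s', K a (s - s') • (g s - g s'))
          = (∫ s', (K a (s - s') • g s - K a (s - s') • g s')) := by
            refine integral_congr_ae (Eventually.of_forall fun s' => ?_)
            beta_reduce
            rw [smul_sub]
        _ = (∫ s', K a (s - s') • g s) - ∫ s', K a (s - s') • g s' :=
            integral_sub ((K_shift_integrable ha s).smul_const (g s))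
              (conv_integrand_integrable' ha hg s)
        _ = g s - ∫ s', K a (s - s') • g s' := by rw [← e0]
    rw [e1]
    refine (norm_integral_le_integral_norm _).trans ?_
    have e2 : (∫ s', ‖K a (s - s') • (g s - g s')‖) = ∫ s', K a (s - s') * ‖g s - g s'‖ := by
      refine integral_congr_ae (Eventually.of_forall fun s' => ?_)
      beta_reduce
      rw [norm_smul, Real.norm_eq_abs, abs_of_nonneg (K_nonneg ha _)]
    rw [e2]
    -- substitute s' = s - y
    have e3 : (∫ s', K a (s - s') * ‖g s - g s'‖) = ∫ y, K a y * ‖g s - g (s - y)‖ := by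
      have := integral_sub_left_eq_self (fun y => K a y * ‖g s - g (s - y)‖) volume s
      rw [← this]
      refine integral_congr_ae (Eventually.of_forall fun s' => ?_)
      simp [sub_sub_cancel]
    rw [e3]
  -- integrate and use Fubini
  have hmono : (∫ s, ‖g s - ∫ s', K a (s - s') • g s'‖)
      ≤ ∫ s, ∫ y, K a y * ‖g s - g (s - y)‖ := by
    refine integral_mono_of_nonneg (Eventually.of_forall fun s => norm_nonneg _)
      hG.integral_prod_left (Eventually.of_forall hpt)
  refine hmono.trans ?_
  rw [integral_integral_swap hG]
  refine le_of_eq (integral_congr_ae (Eventually.of_forall fun y => ?_))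
  beta_reduce
  rw [integral_const_mul]
  rfl

lemma step3 {g : ℝ → H} (hgc : Continuous g) (hgs : HasCompactSupport g) {δ : ℝ} (hδ : 0 < δ) :
    ∃ a : ℝ, 0 < a ∧ (∫ s, ‖g s - ∫ s', K a (s - s') • g s'‖) ≤ δ := by
  have h1 : ∀ᶠ a in nhdsWithin 0 (Set.Ioi 0), (∫ y, K a y * om g y) < δ :=
    (A_tendsto hgc hgs).eventually (gt_mem_nhds hδ)
  obtain ⟨a, ha1, ha2⟩ := (h1.and self_mem_nhdsWithin).exists
  exact ⟨a, ha2, (step3core ha2 hgc hgs).trans ha1.le⟩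

end FeldmanAux

open FeldmanAux in
/-- Feldman-type theorem (vector form): if `ψ_τ`, `τ ∈ (0,1)`, and `ψ` are strongly
measurable `H`-valued functions on `ℝ`, uniformly bounded by `M`, and the Poisson
extensions `Ψ_τ(t+is) = (P_t ∗ ψ_τ)(s)` converge pointwise on the open right half-plane
to `Ψ(t+is) = (P_t ∗ ψ)(s)` as `τ → 0⁺`, then for every `v ∈ L¹(ℝ, H)`,
`∫ ⟪v(t), ψ_τ(t)⟫ dt → ∫ ⟪v(t), ψ(t)⟫ dt` as `τ → 0⁺`. -/
theorem stmt4 {H : Type*} [NormedAddCommGroup H] [InnerProductSpace ℂ H] [CompleteSpace H]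
    (M : ℝ) (hM : 0 < M)
    (ψ : ℝ → ℝ → H) (ψlim : ℝ → H)
    (hψmeas : ∀ τ ∈ Set.Ioo (0 : ℝ) 1, StronglyMeasurable (ψ τ))
    (hψbd : ∀ τ ∈ Set.Ioo (0 : ℝ) 1, ∀ᵐ s : ℝ, ‖ψ τ s‖ ≤ M)
    (hψlimmeas : StronglyMeasurable ψlim)
    (hψlimbd : ∀ᵐ s : ℝ, ‖ψlim s‖ ≤ M)
    (P : ℝ → ℝ → ℝ) (hP : ∀ t s, P t s = (t / π) / (t ^ 2 + s ^ 2))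
    (hconv : ∀ z : ℂ, 0 < z.re →
      Tendsto (fun τ : ℝ => ∫ s' : ℝ, P z.re (z.im - s') • ψ τ s')
        (nhdsWithin 0 (Set.Ioo 0 1))
        (nhds (∫ s' : ℝ, P z.re (z.im - s') • ψlim s')))
    (v : ℝ → H) (hv : Integrable v) :
    Tendsto (fun τ : ℝ => ∫ t : ℝ, ⟪v t, ψ τ t⟫) (nhdsWithin 0 (Set.Ioo 0 1))
      (nhds (∫ t : ℝ, ⟪v t, ψlim t⟫)) := by
  have hM0 : 0 ≤ M := hM.le
  -- restate the hypothesis in terms of the kernel `K`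
  have hconvK : ∀ a : ℝ, 0 < a → ∀ c : ℝ,
      Tendsto (fun τ : ℝ => ∫ s, K a (c - s) • ψ τ s) (nhdsWithin 0 (Set.Ioo 0 1))
        (nhds (∫ s, K a (c - s) • ψlim s)) := by
    intro a ha c
    have hre : ((a : ℂ) + (c : ℂ) * Complex.I).re = a := by simp
    have him : ((a : ℂ) + (c : ℂ) * Complex.I).im = c := by simp
    have h := hconv ((a : ℂ) + (c : ℂ) * Complex.I) (by rw [hre]; exact ha)
    rw [hre, him] at h
    simpa only [hP, K_def] using h
  rw [Metric.tendsto_nhds]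
  intro ε hε
  set δ' : ℝ := ε / (12 * (M + 1)) with hδ'
  have hδ'0 : 0 < δ' := by positivity
  obtain ⟨g, hgsupp, hgapprox, hgcont, hgint⟩ :=
    hv.exists_hasCompactSupport_integral_sub_le hδ'0
  obtain ⟨a, ha, haapprox⟩ := step3 hgcont hgsupp hδ'0
  set w : ℝ → H := fun s => ∫ s', K a (s - s') • g s' with hwdef
  -- `w` is integrable
  have hwSM : StronglyMeasurable w := by
    apply StronglyMeasurable.integral_prod_right' (f := fun p : ℝ × ℝ => K a (p.1 - p.2) • g p.2)
    exact (((K_cont ha).comp (continuous_fst.sub continuous_snd)).stronglyMeasurable).smul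
      (hgcont.stronglyMeasurable.comp_measurable measurable_snd)
  have hprod : Integrable (fun p : ℝ × ℝ => ‖g p.2‖ * K a (p.1 - p.2)) (volume.prod volume) :=
    Integrable.convolution_integrand (ContinuousLinearMap.mul ℝ ℝ) hgint.norm (K_integrable ha)
  have hwint : Integrable w := by
    refine Integrable.mono' hprod.integral_prod_left hwSM.aestronglyMeasurable ?_
    refine Eventually.of_forall fun s => ?_
    refine (norm_integral_le_integral_norm _).trans ?_
    refine le_of_eq (integral_congr_ae (Eventually.of_forall fun s' => ?_))
    beta_reduce
    rw [norm_smul, Real.norm_eq_abs, abs_of_nonneg (K_nonneg ha _), mul_comm]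
  -- convergence for the mollified test function `w`
  have h1 : Tendsto (fun τ : ℝ => ∫ s, ⟪w s, ψ τ s⟫) (nhdsWithin 0 (Set.Ioo 0 1))
      (nhds (∫ s, ⟪w s, ψlim s⟫)) :=
    step1 ha hgint hψmeas hψbd hψlimmeas hψlimbd (hconvK a ha)
  have hev := Metric.tendsto_nhds.1 h1 (ε / 3) (by positivity)
  filter_upwards [hev, self_mem_nhdsWithin] with τ hτ1 hτ2
  rw [dist_eq_norm]
  rw [dist_eq_norm] at hτ1
  have hψτm : AEStronglyMeasurable (ψ τ) volume := (hψmeas τ hτ2).aestronglyMeasurable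
  have hψτb := hψbd τ hτ2
  -- L¹ distance between v and w
  have hvw : (∫ t, ‖v t - w t‖) ≤ 2 * δ' := by
    have htri : (∫ t, ‖v t - w t‖) ≤ ∫ t, (‖v t - g t‖ + ‖g t - w t‖) := by
      refine integral_mono_of_nonneg (Eventually.of_forall fun t => norm_nonneg _)
        (((hv.sub hgint).norm).add ((hgint.sub hwint).norm))
        (Eventually.of_forall fun t => ?_)
      beta_reduce
      rw [← dist_eq_norm, ← dist_eq_norm, ← dist_eq_norm]
      exact dist_triangle _ _ _
    have hint1 : Integrable (fun t => ‖v t - g t‖) volume := (hv.sub hgint).norm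
    have hint2 : Integrable (fun t => ‖g t - w t‖) volume := (hgint.sub hwint).norm
    rw [integral_add hint1 hint2] at htri
    have h2 := haapprox
    linarith
  have hvw0 : (0:ℝ) ≤ ∫ t, ‖v t - w t‖ := integral_nonneg fun t => norm_nonneg _
  -- numeric bound
  have hnum : M * ∫ t, ‖v t - w t‖ ≤ ε / 6 := by
    have h3 : M * ∫ t, ‖v t - w t‖ ≤ (M + 1) * (2 * δ') := by
      refine mul_le_mul (by linarith) hvw hvw0 (by linarith)
    have h4 : (M + 1) * (2 * δ') = ε / 6 := by
      rw [hδ']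
      field_simp
      ring
    linarith
  have e1 : ‖(∫ t, ⟪v t, ψ τ t⟫) - ∫ t, ⟪w t, ψ τ t⟫‖ ≤ M * ∫ t, ‖v t - w t‖ :=
    pair_diff hv hwint hψτm hψτb
  have e2 : ‖(∫ t, ⟪v t, ψlim t⟫) - ∫ t, ⟪w t, ψlim t⟫‖ ≤ M * ∫ t, ‖v t - w t‖ :=
    pair_diff hv hwint hψlimmeas.aestronglyMeasurable hψlimbd
  have hsplit : (∫ t, ⟪v t, ψ τ t⟫) - ∫ t, ⟪v t, ψlim t⟫
      = ((∫ t, ⟪v t, ψ τ t⟫) - ∫ t, ⟪w t, ψ τ t⟫)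
        + (((∫ t, ⟪w t, ψ τ t⟫) - ∫ t, ⟪w t, ψlim t⟫)
          + ((∫ t, ⟪w t, ψlim t⟫) - ∫ t, ⟪v t, ψlim t⟫)) := by ring
  rw [hsplit]
  have hnormrev : ‖(∫ t, ⟪w t, ψlim t⟫) - ∫ t, ⟪v t, ψlim t⟫‖ ≤ M * ∫ t, ‖v t - w t‖ := by
    rw [norm_sub_rev]
    exact e2
  calc ‖_ + _‖ ≤ ‖(∫ t, ⟪v t, ψ τ t⟫) - ∫ t, ⟪w t, ψ τ t⟫‖
        + (‖(∫ t, ⟪w t, ψ τ t⟫) - ∫ t, ⟪w t, ψlim t⟫‖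
          + ‖(∫ t, ⟪w t, ψlim t⟫) - ∫ t, ⟪v t, ψlim t⟫‖) :=
      (norm_add_le _ _).trans (by gcongr; exact norm_add_le _ _)
    _ < ε := by linarith
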